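/- For any level-L quadrants Q^start ≤ Q^end, the set Y = ⋃_{Q=Q^start}^{Q^end} Ω(Q) ⊆ ℝ^d either has star-shaped interior, or there exists c with Q^start ≤ c < Q^end such that Y = Y₁ ∪ Y₂ where Y₁ = ⋃_{Q=Q^start}^{c} Ω(Q) and Y₂ = ⋃_{Q=c+1}^{Q^end} Ω(Q) both have star-shaped interiors. -/

import Mathlib

/-- The `r`-th coordinate (1 ≤ r ≤ d) of a level-`L` quadrant `Q` in dimension `d`. -/
def mortonCoord (d L r Q : ℕ) : ℕ :=
  ∑ ℓ ∈ Finset.range L, (Q / 2 ^ (ℓ * d + (r - 1)) % 2) * 2 ^ ℓ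

/-- Two level-`L` quadrants are face-neighbors: they differ by exactly one in exactly
one coordinate and agree in all other coordinates. -/
def MortonFaceNbr (d L Q Q' : ℕ) : Prop :=
  Q ≠ Q' ∧ ∃ r, 1 ≤ r ∧ r ≤ d ∧
    ((mortonCoord d L r Q : ℤ) - (mortonCoord d L r Q' : ℤ)).natAbs = 1 ∧
    ∀ s, 1 ≤ s → s ≤ d → s ≠ r → mortonCoord d L s Q = mortonCoord d L s Q'

/-- A set of level-`L` quadrants is face-connected: the graph on `S` whose edges join
face-neighbors is connected. -/
def MortonFaceConnected (d L : ℕ) (S : Set ℕ) : Prop :=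
  ∀ Q ∈ S, ∀ Q' ∈ S,
    Relation.ReflTransGen (fun a b => a ∈ S ∧ b ∈ S ∧ MortonFaceNbr d L a b) Q Q'

/-- `S` has at most `n` face-connected components: it can be written as a union of `n`
face-connected subsets. -/
def MortonCompBound (d L : ℕ) (S : Set ℕ) (n : ℕ) : Prop :=
  ∃ f : Fin n → Set ℕ, S = ⋃ i, f i ∧ ∀ i, MortonFaceConnected d L (f i)

/-- The closed box `Ω(Q) = Π_r [2^{-L} Q_r, 2^{-L}(Q_r + 1)] ⊆ ℝ^d` occupied by the
level-`L` quadrant `Q`. -/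
def mortonOmega (d L Q : ℕ) : Set (Fin d → ℝ) :=
  {x | ∀ r : Fin d,
    (mortonCoord d L ((r : ℕ) + 1) Q : ℝ) / 2 ^ L ≤ x r ∧
    x r ≤ ((mortonCoord d L ((r : ℕ) + 1) Q : ℝ) + 1) / 2 ^ L}

/-- `A ⊆ ℝ^d` is star-shaped with respect to `p`. -/
def StarShapedWrt {d : ℕ} (A : Set (Fin d → ℝ)) (p : Fin d → ℝ) : Prop :=
  p ∈ A ∧ ∀ x ∈ A, segment ℝ p x ⊆ A

/-- `A ⊆ ℝ^d` is star-shaped with respect to some point of `A`. -/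
def StarShaped {d : ℕ} (A : Set (Fin d → ℝ)) : Prop :=
  ∃ p, StarShapedWrt A p

namespace MortonAux

/-- bit `i` of `X` -/
def dig (i X : ℕ) : ℕ := X / 2 ^ i % 2

lemma dig_le_one (i X : ℕ) : dig i X ≤ 1 := Nat.lt_succ_iff.mp (Nat.mod_lt _ (by norm_num))

lemma sum_bits_lt {n : ℕ} (b : ℕ → ℕ) (hb : ∀ i, b i ≤ 1) :
    ∑ i ∈ Finset.range n, b i * 2 ^ i < 2 ^ n := by
  have h1 : ∑ i ∈ Finset.range n, b i * 2 ^ i ≤ ∑ i ∈ Finset.range n, 1 * 2 ^ i :=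
    Finset.sum_le_sum fun i _ => Nat.mul_le_mul_right _ (hb i)
  have h2 : ∑ i ∈ Finset.range n, 1 * 2 ^ i = 2 ^ n - 1 := by
    simp [Nat.geomSum_eq]
  have h3 : 1 ≤ 2 ^ n := Nat.one_le_two_pow
  omega

lemma dig_sum_bits {n : ℕ} (b : ℕ → ℕ) (hb : ∀ i, b i ≤ 1) {j : ℕ} (hj : j < n) :
    dig j (∑ i ∈ Finset.range n, b i * 2 ^ i) = b j := by
  have hsplit : ∑ i ∈ Finset.range n, b i * 2 ^ i
      = (∑ i ∈ Finset.range j, b i * 2 ^ i)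
        + 2 ^ j * (b j + 2 * ∑ i ∈ Finset.range (n - j - 1), b (j + 1 + i) * 2 ^ i) := by
    have h1 : n = j + (n - j) := by omega
    rw [h1, Finset.sum_range_add]
    congr 1
    have h2 : n - j = 1 + (n - j - 1) := by omega
    rw [h2, Finset.sum_range_add]
    simp only [Finset.mul_sum, pow_add, pow_succ, Finset.sum_range_one, pow_zero]
    rw [Nat.mul_add]
    congr 1
    · ring
    · rw [Finset.mul_sum]
      have hn : j + (1 + (n - j - 1)) - j - 1 = n - j - 1 := by omega
      rw [hn]
      apply Finset.sum_congr rfl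
      intro i _
      have : j + (1 + i) = j + 1 + i := by omega
      rw [this]
      ring
  rw [hsplit]
  have hA : ∑ i ∈ Finset.range j, b i * 2 ^ i < 2 ^ j := sum_bits_lt b hb
  unfold dig
  rw [Nat.add_mul_div_left _ _ (Nat.pow_pos (n := j) (by norm_num : 0 < 2)),
    Nat.div_eq_of_lt hA]
  have := hb j
  omega

lemma sum_dig_self {n X : ℕ} (hX : X < 2 ^ n) :
    ∑ i ∈ Finset.range n, dig i X * 2 ^ i = X := by
  induction n generalizing X with
  | zero => simpa using by omega
  | succ n ih =>
    rw [Finset.sum_range_succ']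
    have h0 : dig 0 X * 2 ^ 0 = X % 2 := by simp [dig]
    have hstep : ∀ i, dig (i + 1) X = dig i (X / 2) := by
      intro i; unfold dig
      rw [pow_succ, Nat.div_div_eq_div_mul, Nat.mul_comm]
    have hX2 : X / 2 < 2 ^ n := by
      have := hX; rw [pow_succ] at this; omega
    calc ∑ i ∈ Finset.range n, dig (i+1) X * 2 ^ (i+1) + dig 0 X * 2 ^ 0
        = 2 * ∑ i ∈ Finset.range n, dig i (X / 2) * 2 ^ i + X % 2 := by
          rw [h0, Finset.mul_sum]
          congr 1
          apply Finset.sum_congr rfl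
          intro i _
          rw [hstep i, pow_succ]
          ring
      _ = 2 * (X / 2) + X % 2 := by rw [ih hX2]
      _ = X := by omega


variable {d L : ℕ}

/-- `mortonCoord` with 0-based coordinate index, as a sum of bits. -/
def mc (d L r Q : ℕ) : ℕ := ∑ ℓ ∈ Finset.range L, dig (ℓ * d + r) Q * 2 ^ ℓ

lemma mc_lt (r Q : ℕ) : mc d L r Q < 2 ^ L := sum_bits_lt _ fun i => dig_le_one _ _

lemma dig_mc {r Q ℓ : ℕ} (hℓ : ℓ < L) : dig ℓ (mc d L r Q) = dig (ℓ * d + r) Q :=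
  dig_sum_bits _ (fun i => dig_le_one _ _) hℓ

/-- interleave: bit `ℓ` of `c` goes to bit `ℓ*d` -/
def spr (d L c : ℕ) : ℕ := ∑ ℓ ∈ Finset.range L, dig ℓ c * 2 ^ (ℓ * d)

lemma spr_succ (c : ℕ) : spr d (L + 1) c = c % 2 + 2 ^ d * spr d L (c / 2) := by
  unfold spr
  rw [Finset.sum_range_succ']
  have h0 : dig 0 c * 2 ^ (0 * d) = c % 2 := by simp [dig]
  rw [h0, Finset.mul_sum, Nat.add_comm]
  congr 1
  apply Finset.sum_congr rfl
  intro i _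
  have h1 : dig (i + 1) c = dig i (c / 2) := by
    unfold dig
    rw [pow_succ, Nat.mul_comm, ← Nat.div_div_eq_div_mul]
  rw [h1]
  have h2 : (i + 1) * d = d + i * d := by ring
  rw [h2, pow_add]
  ring

lemma spr_strictMono (hd : 1 ≤ d) :
    ∀ L c c', c < c' → c' < 2 ^ L → spr d L c < spr d L c' := by
  intro L
  induction L with
  | zero => intro c c' h h'; omega
  | succ n ih =>
    intro c c' h h'
    rw [spr_succ, spr_succ]
    have hc' : c' / 2 < 2 ^ n := by rw [pow_succ] at h'; omega
    rcases Nat.lt_or_ge (c / 2) (c' / 2) with hlt | hge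
    · have := ih (c / 2) (c' / 2) hlt hc'
      have h2 : (2:ℕ) ≤ 2 ^ d := by
        calc (2:ℕ) = 2 ^ 1 := by norm_num
        _ ≤ 2 ^ d := Nat.pow_le_pow_right (by norm_num) hd
      have hm : c % 2 < 2 := Nat.mod_lt _ (by norm_num)
      have h3 : 2 ^ d * spr d n (c / 2) + 2 ^ d ≤ 2 ^ d * spr d n (c' / 2) := by
        have h4 : spr d n (c / 2) + 1 ≤ spr d n (c' / 2) := this
        calc 2 ^ d * spr d n (c / 2) + 2 ^ d = 2 ^ d * (spr d n (c / 2) + 1) := by ring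
          _ ≤ 2 ^ d * spr d n (c' / 2) := Nat.mul_le_mul_left _ h4
      calc c % 2 + 2 ^ d * spr d n (c / 2)
          < 2 ^ d + 2 ^ d * spr d n (c / 2) :=
            Nat.add_lt_add_right (lt_of_lt_of_le hm h2) _
        _ = 2 ^ d * spr d n (c / 2) + 2 ^ d := by ring
        _ ≤ 2 ^ d * spr d n (c' / 2) := h3
        _ ≤ c' % 2 + 2 ^ d * spr d n (c' / 2) := Nat.le_add_left _ _
    · have heq : c / 2 = c' / 2 := by omega
      rw [heq]
      have : c % 2 < c' % 2 := by omega
      omega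

lemma spr_mono (hd : 1 ≤ d) {c c' : ℕ} (h : c ≤ c') (h' : c' < 2 ^ L) :
    spr d L c ≤ spr d L c' := by
  rcases h.lt_or_eq with hlt | rfl
  · exact le_of_lt (spr_strictMono hd L c c' hlt h')
  · exact le_rfl

/-- inverse morton: assemble from coordinates -/
def unm (d L : ℕ) (c : ℕ → ℕ) : ℕ := ∑ r ∈ Finset.range d, 2 ^ r * spr d L (c r)

lemma sum_pairs (f : ℕ → ℕ) :
    ∀ L, ∑ r ∈ Finset.range d, ∑ ℓ ∈ Finset.range L, f (ℓ * d + r)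
      = ∑ i ∈ Finset.range (d * L), f i := by
  intro L
  induction L with
  | zero => simp
  | succ n ih =>
    have h1 : d * (n + 1) = d * n + d := by ring
    rw [h1, Finset.sum_range_add, ← ih]
    rw [← Finset.sum_add_distrib]
    apply Finset.sum_congr rfl
    intro r hr
    rw [Finset.sum_range_succ]
    congr 2
    rw [Nat.mul_comm]

lemma unm_eq_sum (c : ℕ → ℕ) :
    unm d L c = ∑ i ∈ Finset.range (d * L),
      dig (i / d) (c (i % d)) * 2 ^ i := by
  unfold unm spr
  rw [← sum_pairs]
  apply Finset.sum_congr rfl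
  intro r hr
  rw [Finset.mul_sum]
  apply Finset.sum_congr rfl
  intro ℓ _
  have hr' : r < d := Finset.mem_range.mp hr
  have hd0 : 0 < d := by omega
  have hdiv : (ℓ * d + r) / d = ℓ := by
    rw [Nat.mul_comm, Nat.mul_add_div hd0, Nat.div_eq_of_lt hr']
    omega
  have hmod : (ℓ * d + r) % d = r := by
    rw [Nat.mul_comm, Nat.mul_add_mod, Nat.mod_eq_of_lt hr']
  rw [hdiv, hmod, pow_add]
  ring

lemma unm_lt (c : ℕ → ℕ) : unm d L c < 2 ^ (d * L) := by
  rw [unm_eq_sum]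
  exact sum_bits_lt _ fun i => dig_le_one _ _

lemma dig_unm {c : ℕ → ℕ} {ℓ r : ℕ} (hℓ : ℓ < L) (hr : r < d) :
    dig (ℓ * d + r) (unm d L c) = dig ℓ (c r) := by
  rw [unm_eq_sum]
  have hi : ℓ * d + r < d * L := by
    calc ℓ * d + r < ℓ * d + d := by omega
    _ = (ℓ + 1) * d := by ring
    _ ≤ L * d := Nat.mul_le_mul_right _ (by omega)
    _ = d * L := Nat.mul_comm _ _
  rw [dig_sum_bits _ (fun i => dig_le_one _ _) hi]
  have hd0 : 0 < d := by omega
  have hdiv : (ℓ * d + r) / d = ℓ := by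
    rw [Nat.mul_comm, Nat.mul_add_div hd0, Nat.div_eq_of_lt hr]
    omega
  have hmod : (ℓ * d + r) % d = r := by
    rw [Nat.mul_comm, Nat.mul_add_mod, Nat.mod_eq_of_lt hr]
  rw [hdiv, hmod]

lemma mc_unm {c : ℕ → ℕ} {r : ℕ} (hr : r < d) (hc : c r < 2 ^ L) :
    mc d L r (unm d L c) = c r := by
  unfold mc
  calc ∑ ℓ ∈ Finset.range L, dig (ℓ * d + r) (unm d L c) * 2 ^ ℓ
      = ∑ ℓ ∈ Finset.range L, dig ℓ (c r) * 2 ^ ℓ := by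
        apply Finset.sum_congr rfl
        intro ℓ hℓ
        rw [dig_unm (Finset.mem_range.mp hℓ) hr]
    _ = c r := sum_dig_self hc

lemma unm_mc {Q : ℕ} (hQ : Q < 2 ^ (d * L)) :
    unm d L (fun r => mc d L r Q) = Q := by
  rw [unm_eq_sum]
  calc ∑ i ∈ Finset.range (d * L), dig (i / d) (mc d L (i % d) Q) * 2 ^ i
      = ∑ i ∈ Finset.range (d * L), dig i Q * 2 ^ i := by
        apply Finset.sum_congr rfl
        intro i hi
        have hiL : i < d * L := Finset.mem_range.mp hi
        have hd0 : 0 < d := by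
          rcases Nat.eq_zero_or_pos d with h | h
          · subst h; simp at hiL
          · exact h
        have hdivL : i / d < L := Nat.div_lt_of_lt_mul (by omega)
        rw [dig_mc hdivL]
        congr 2
        rw [Nat.mul_comm (i / d) d, Nat.div_add_mod]
    _ = Q := sum_dig_self hQ

lemma mc_mono (hd : 1 ≤ d) {Q Q' : ℕ} (hQ : Q < 2 ^ (d * L)) (hQ' : Q' < 2 ^ (d * L))
    (h : ∀ r, r < d → mc d L r Q ≤ mc d L r Q') : Q ≤ Q' := by
  rw [← unm_mc (d := d) (L := L) hQ, ← unm_mc (d := d) (L := L) hQ']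
  unfold unm
  apply Finset.sum_le_sum
  intro r hr
  exact Nat.mul_le_mul_left _ (spr_mono hd (h r (Finset.mem_range.mp hr)) (mc_lt _ _))


/-- for `i ≥ k`, adding `j < 2^k` to a `2^k`-aligned number does not change bit `i`'s div -/
lemma div_pow_add {M j k i : ℕ} (hM : M % 2 ^ k = 0) (hj : j < 2 ^ k) (hik : k ≤ i) :
    (M + j) / 2 ^ i = M / 2 ^ i := by
  obtain ⟨m, hm⟩ : 2 ^ k ∣ M := Nat.dvd_of_mod_eq_zero hM
  subst hm
  have h1 : 2 ^ i = 2 ^ k * 2 ^ (i - k) := by rw [← pow_add]; congr 1; omega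
  rw [h1, ← Nat.div_div_eq_div_mul, ← Nat.div_div_eq_div_mul]
  congr 1
  rw [Nat.mul_comm (2 ^ k) m, Nat.add_comm, Nat.add_mul_div_right _ _ (Nat.pow_pos (n := k) (by norm_num : 0 < 2)),
    Nat.div_eq_of_lt hj, Nat.mul_div_cancel _ (Nat.pow_pos (n := k) (by norm_num : 0 < 2))]
  omega

lemma dig_aligned_zero {M k i : ℕ} (hM : M % 2 ^ k = 0) (hik : i < k) : dig i M = 0 := by
  obtain ⟨m, hm⟩ : 2 ^ k ∣ M := Nat.dvd_of_mod_eq_zero hM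
  subst hm
  unfold dig
  have h1 : 2 ^ k * m / 2 ^ i = 2 ^ (k - i) * m := by
    have : 2 ^ k = 2 ^ i * 2 ^ (k - i) := by rw [← pow_add]; congr 1; omega
    rw [this, Nat.mul_assoc, Nat.mul_div_cancel_left _ (Nat.pow_pos (n := i) (by norm_num : 0 < 2))]
  rw [h1]
  have h2 : 2 ∣ 2 ^ (k - i) * m := Dvd.dvd.mul_right (dvd_pow_self 2 (by omega)) m
  omega

/-- bit `i < k` of `M - 1` is 1 when `2^k ∣ M`, `M ≥ 2^k`. -/
lemma dig_pred_one {M k i : ℕ} (hM : M % 2 ^ k = 0) (hMk : 2 ^ k ≤ M) (hik : i < k) :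
    dig i (M - 1) = 1 := by
  have hdvd : 2 ^ (i + 1) ∣ M := by
    apply Nat.dvd_trans _ (Nat.dvd_of_mod_eq_zero hM)
    exact pow_dvd_pow 2 (by omega)
  obtain ⟨s, hs⟩ := hdvd
  have hs1 : 1 ≤ s := by
    rcases Nat.eq_zero_or_pos s with h | h
    · subst h; simp at hs; omega
    · exact h
  have hmod : (M - 1) % 2 ^ (i + 1) = 2 ^ (i + 1) - 1 := by
    have h1 : M - 1 = (2 ^ (i + 1) - 1) + 2 ^ (i + 1) * (s - 1) := by
      have hp : 1 ≤ 2 ^ (i + 1) := Nat.one_le_two_pow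
      have e : M = 2 ^ (i + 1) * (s - 1) + 2 ^ (i + 1) := by
        rw [hs]
        cases' Nat.exists_eq_add_of_le hs1 with t ht
        subst ht
        have e2 : 1 + t - 1 = t := by omega
        rw [e2]
        ring
      omega
    rw [h1, Nat.add_mul_mod_self_left]
    exact Nat.mod_eq_of_lt (by have : 1 ≤ 2 ^ (i+1) := Nat.one_le_two_pow; omega)
  unfold dig
  rw [← Nat.mod_mul_right_div_self, ← pow_succ, hmod]
  have h2 : (2 ^ (i + 1) - 1) / 2 ^ i = 1 := by
    have h3 : 2 ^ (i + 1) - 1 = (2 ^ i - 1) + 1 * 2 ^ i := by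
      have hp : 1 ≤ 2 ^ i := Nat.one_le_two_pow
      have : 2 ^ (i + 1) = 2 * 2 ^ i := by rw [pow_succ]; ring
      omega
    rw [h3, Nat.add_mul_div_right _ _ (Nat.pow_pos (n := i) (by norm_num : 0 < 2)),
      Nat.div_eq_of_lt (by have : 1 ≤ 2 ^ i := Nat.one_le_two_pow; omega)]
  rw [h2]

/-- coordinates of an aligned number are below those of aligned + small offset -/
lemma mc_align_le {M j k r : ℕ} (hM : M % 2 ^ k = 0) (hj : j < 2 ^ k) :
    mc d L r M ≤ mc d L r (M + j) := by
  unfold mc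
  apply Finset.sum_le_sum
  intro ℓ _
  apply Nat.mul_le_mul_right
  rcases Nat.lt_or_ge (ℓ * d + r) k with hik | hik
  · rw [dig_aligned_zero hM hik]; exact Nat.zero_le _
  · unfold dig
    rw [div_pow_add hM hj hik]

/-- coordinates of anything in `[M - 2^k, M)` are below those of `M - 1` -/
lemma mc_le_pred {M Q k r : ℕ} (hM : M % 2 ^ k = 0) (hMk : 2 ^ k ≤ M)
    (hQ1 : M - 2 ^ k ≤ Q) (hQ2 : Q < M) :
    mc d L r Q ≤ mc d L r (M - 1) := by
  unfold mc
  apply Finset.sum_le_sum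
  intro ℓ _
  apply Nat.mul_le_mul_right
  set i := ℓ * d + r with hi
  rcases Nat.lt_or_ge i k with hik | hik
  · rw [dig_pred_one hM hMk hik]; exact dig_le_one _ _
  · have hM' : (M - 2 ^ k) % 2 ^ k = 0 := by
      obtain ⟨m, hm⟩ : 2 ^ k ∣ M := Nat.dvd_of_mod_eq_zero hM
      have h5 : M - 2 ^ k = 2 ^ k * (m - 1) := by
        rw [hm, Nat.mul_sub, Nat.mul_one]
      rw [h5, Nat.mul_mod_right]
    have e1 : Q = (M - 2 ^ k) + (Q - (M - 2 ^ k)) := by omega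
    have e2 : M - 1 = (M - 2 ^ k) + (2 ^ k - 1) := by
      have : 1 ≤ 2 ^ k := Nat.one_le_two_pow; omega
    unfold dig
    rw [e1, e2, div_pow_add hM' (by omega) hik, div_pow_add hM' (by omega) hik]


lemma mortonCoord_eq_mc (r Q : ℕ) : mortonCoord d L (r + 1) Q = mc d L r Q := by
  unfold mortonCoord mc dig
  simp

lemma mem_omega {Q : ℕ} {x : Fin d → ℝ} :
    x ∈ mortonOmega d L Q ↔ ∀ r : Fin d,
      (mc d L (r : ℕ) Q : ℝ) / 2 ^ L ≤ x r ∧ x r ≤ ((mc d L (r : ℕ) Q : ℝ) + 1) / 2 ^ L := by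
  unfold mortonOmega
  simp only [Set.mem_setOf_eq, mortonCoord_eq_mc]

/-- center of the box of quadrant `C` -/
noncomputable def ctr (d L C : ℕ) : Fin d → ℝ := fun r => ((mc d L (r : ℕ) C : ℝ) + 1 / 2) / 2 ^ L

lemma ctr_mem (C : ℕ) : ctr d L C ∈ mortonOmega d L C := by
  rw [mem_omega]
  intro r
  have h : (0:ℝ) < 2 ^ L := by positivity
  constructor
  · exact (div_le_div_iff_of_pos_right h).mpr (by linarith)
  · exact (div_le_div_iff_of_pos_right h).mpr (by linarith)

lemma ctr_mem_interior (C : ℕ) {Y : Set (Fin d → ℝ)} (hY : mortonOmega d L C ⊆ Y) :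
    ctr d L C ∈ interior Y := by
  have hopen : IsOpen {x : Fin d → ℝ | ∀ r : Fin d, (mc d L (r:ℕ) C : ℝ) / 2 ^ L < x r ∧
      x r < ((mc d L (r:ℕ) C : ℝ) + 1) / 2 ^ L} := by
    have : {x : Fin d → ℝ | ∀ r : Fin d, (mc d L (r:ℕ) C : ℝ) / 2 ^ L < x r ∧
        x r < ((mc d L (r:ℕ) C : ℝ) + 1) / 2 ^ L}
        = Set.pi Set.univ (fun r : Fin d =>
            Set.Ioo ((mc d L (r:ℕ) C : ℝ) / 2 ^ L) (((mc d L (r:ℕ) C : ℝ) + 1) / 2 ^ L)) := by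
      ext x
      simp [Set.mem_pi, Set.mem_Ioo]
    rw [this]
    exact isOpen_set_pi Set.finite_univ (fun r _ => isOpen_Ioo)
  apply Set.mem_of_mem_of_subset _ (interior_maximal _ hopen)
  · intro r
    have h : (0:ℝ) < 2 ^ L := by positivity
    constructor
    · exact (div_lt_div_iff_of_pos_right h).mpr (by norm_num)
    · exact (div_lt_div_iff_of_pos_right h).mpr (by norm_num)
  · intro x hx
    apply hY
    rw [mem_omega]
    intro r
    exact ⟨le_of_lt (hx r).1, le_of_lt (hx r).2⟩


/-- any point on a segment from the center of box `C` to a point of box `Q` lies in a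
box whose coordinates are between those of `C` and `Q`. -/
lemma seg_subset (hd : 1 ≤ d) {C Q : ℕ} {x y : Fin d → ℝ}
    (hx : x ∈ mortonOmega d L Q) (hy : y ∈ segment ℝ (ctr d L C) x) :
    ∃ Q', Q' < 2 ^ (d * L) ∧ y ∈ mortonOmega d L Q' ∧
      ∀ r : ℕ, r < d →
        min (mc d L r C) (mc d L r Q) ≤ mc d L r Q' ∧
        mc d L r Q' ≤ max (mc d L r C) (mc d L r Q) := by
  classical
  have hL : (0:ℝ) < 2 ^ L := by positivity
  -- bounds on y
  obtain ⟨u, v, hu, hv, huv, hyeq⟩ := hy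
  have hybound : ∀ r : Fin d,
      ((min (mc d L (r:ℕ) C) (mc d L (r:ℕ) Q) : ℕ) : ℝ) / 2 ^ L ≤ y r ∧
      y r ≤ (((max (mc d L (r:ℕ) C) (mc d L (r:ℕ) Q) : ℕ) : ℝ) + 1) / 2 ^ L := by
    intro r
    set lo : ℕ := min (mc d L (r:ℕ) C) (mc d L (r:ℕ) Q) with hlo
    set hi : ℕ := max (mc d L (r:ℕ) C) (mc d L (r:ℕ) Q) with hhi
    have hloC : (lo : ℝ) ≤ (mc d L (r:ℕ) C : ℝ) := by
      have : lo ≤ mc d L (r:ℕ) C := min_le_left _ _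
      exact_mod_cast this
    have hloQ : (lo : ℝ) ≤ (mc d L (r:ℕ) Q : ℝ) := by
      have : lo ≤ mc d L (r:ℕ) Q := min_le_right _ _
      exact_mod_cast this
    have hhiC : (mc d L (r:ℕ) C : ℝ) ≤ (hi : ℝ) := by
      have : mc d L (r:ℕ) C ≤ hi := le_max_left _ _
      exact_mod_cast this
    have hhiQ : (mc d L (r:ℕ) Q : ℝ) ≤ (hi : ℝ) := by
      have : mc d L (r:ℕ) Q ≤ hi := le_max_right _ _
      exact_mod_cast this
    have hp1 : (lo : ℝ) / 2 ^ L ≤ ctr d L C r := by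
      unfold ctr
      exact (div_le_div_iff_of_pos_right hL).mpr (by linarith)
    have hp2 : ctr d L C r ≤ ((hi : ℝ) + 1) / 2 ^ L := by
      unfold ctr
      exact (div_le_div_iff_of_pos_right hL).mpr (by linarith)
    have hx1 : (lo : ℝ) / 2 ^ L ≤ x r := by
      refine le_trans ((div_le_div_iff_of_pos_right hL).mpr hloQ) ?_
      exact (mem_omega.mp hx r).1
    have hx2 : x r ≤ ((hi : ℝ) + 1) / 2 ^ L := by
      refine le_trans (mem_omega.mp hx r).2 ?_
      exact (div_le_div_iff_of_pos_right hL).mpr (by linarith)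
    have hyr : y r = u * ctr d L C r + v * x r := by
      rw [← hyeq]; simp
    constructor
    · rw [hyr]
      calc (lo : ℝ) / 2 ^ L = u * ((lo:ℝ) / 2 ^ L) + v * ((lo:ℝ) / 2 ^ L) := by
            rw [← add_mul, huv]; ring
        _ ≤ u * ctr d L C r + v * x r := by
            apply add_le_add
            · exact mul_le_mul_of_nonneg_left hp1 hu
            · exact mul_le_mul_of_nonneg_left hx1 hv
    · rw [hyr]
      calc u * ctr d L C r + v * x r
          ≤ u * (((hi:ℝ) + 1) / 2 ^ L) + v * (((hi:ℝ) + 1) / 2 ^ L) := by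
            apply add_le_add
            · exact mul_le_mul_of_nonneg_left hp2 hu
            · exact mul_le_mul_of_nonneg_left hx2 hv
        _ = ((hi:ℝ) + 1) / 2 ^ L := by rw [← add_mul, huv]; ring
  -- define the coordinates of the box containing y
  set c' : ℕ → ℕ := fun r =>
    if h : r < d then
      min (max (mc d L r C) (mc d L r Q)) (Nat.floor ((2:ℝ) ^ L * y ⟨r, h⟩))
    else 0 with hc'
  have hc'lt : ∀ r, r < d → c' r < 2 ^ L := by
    intro r hr
    simp only [hc', dif_pos hr]
    exact lt_of_le_of_lt (min_le_left _ _) (by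
      rcases max_choice (mc d L r C) (mc d L r Q) with h | h <;> rw [h] <;> exact mc_lt _ _)
  refine ⟨unm d L c', unm_lt _, ?_, ?_⟩
  · -- y ∈ Ω(unm c')
    rw [mem_omega]
    intro r
    have hr : (r : ℕ) < d := r.isLt
    rw [mc_unm hr (hc'lt _ hr)]
    have hyb := hybound r
    set lo : ℕ := min (mc d L (r:ℕ) C) (mc d L (r:ℕ) Q) with hlo
    set hi : ℕ := max (mc d L (r:ℕ) C) (mc d L (r:ℕ) Q) with hhi
    have hy0 : (0:ℝ) ≤ 2 ^ L * y r := by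
      have := hyb.1
      have h0 : (0:ℝ) ≤ (lo : ℝ) / 2 ^ L := by positivity
      nlinarith
    set f : ℕ := Nat.floor ((2:ℝ) ^ L * y r) with hf
    have hfy : (f : ℝ) ≤ 2 ^ L * y r := Nat.floor_le hy0
    have hyf : 2 ^ L * y r < (f : ℝ) + 1 := Nat.lt_floor_add_one _
    have hcr : c' (r : ℕ) = min hi f := by
      simp only [hc', dif_pos hr, Fin.eta]
      rfl
    rw [hcr]
    rcases le_or_gt f hi with hcase | hcase
    · rw [min_eq_right hcase]
      constructor
      · rw [div_le_iff₀ hL, mul_comm]; exact hfy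
      · rw [le_div_iff₀ hL, mul_comm] at *
        push_cast
        linarith
    · rw [min_eq_left (le_of_lt hcase)]
      have hup : y r ≤ ((hi:ℝ) + 1) / 2 ^ L := hyb.2
      constructor
      · have h1 : ((hi:ℕ):ℝ) + 1 ≤ (f : ℝ) := by
          have : hi + 1 ≤ f := hcase
          exact_mod_cast this
        have h2 : ((hi:ℝ) + 1) ≤ 2 ^ L * y r := le_trans h1 hfy
        rw [div_le_iff₀ hL, mul_comm]
        linarith
      · exact hup
  · -- coordinates between
    intro r hr
    rw [mc_unm hr (hc'lt _ hr)]
    simp only [hc', dif_pos hr]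
    constructor
    · apply le_min
      · exact le_trans (min_le_left _ _) (le_max_left _ _) |>.trans (le_refl _)
      · -- min ≤ floor
        apply Nat.le_floor
        have hyb := hybound ⟨r, hr⟩
        have h1 := hyb.1
        rw [div_le_iff₀ hL, mul_comm] at h1
        exact_mod_cast h1
    · exact min_le_left _ _

/-- if `A` is star-shaped w.r.t. `p` and `p ∈ interior A`, then `interior A` is
star-shaped w.r.t. `p`. -/
lemma star_interior {A : Set (Fin d → ℝ)} {p : Fin d → ℝ}
    (hp : p ∈ interior A) (h : ∀ x ∈ A, segment ℝ p x ⊆ A) :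
    StarShapedWrt (interior A) p := by
  refine ⟨hp, ?_⟩
  intro x hx y hy
  obtain ⟨u, v, hu, hv, huv, hyeq⟩ := hy
  rcases eq_or_lt_of_le hv with hv0 | hvpos
  · have : y = p := by
      rw [← hyeq, ← hv0]
      have : u = 1 := by linarith
      simp [this]
    rw [this]; exact hp
  · rw [mem_interior_iff_mem_nhds, Metric.mem_nhds_iff] at hx ⊢
    obtain ⟨ε, hε, hball⟩ := hx
    refine ⟨v * ε, by positivity, ?_⟩
    intro z hz
    have hx' : x + v⁻¹ • (z - y) ∈ A := by
      apply hball
      rw [Metric.mem_ball, dist_eq_norm]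
      have : x + v⁻¹ • (z - y) - x = v⁻¹ • (z - y) := by abel
      rw [this, norm_smul]
      rw [Metric.mem_ball, dist_eq_norm] at hz
      have hvnorm : ‖v⁻¹‖ = v⁻¹ := by
        rw [Real.norm_eq_abs, abs_of_pos (by positivity)]
      rw [hvnorm]
      calc v⁻¹ * ‖z - y‖ < v⁻¹ * (v * ε) := by
            apply mul_lt_mul_of_pos_left hz (by positivity)
        _ = ε := by field_simp
    have hz' : z = u • p + v • (x + v⁻¹ • (z - y)) := by
      rw [smul_add, smul_smul, mul_inv_cancel₀ (ne_of_gt hvpos), one_smul, ← add_assoc, hyeq]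
      abel
    rw [hz']
    exact h _ hx' ⟨u, v, hu, le_of_lt hvpos, huv, rfl⟩

lemma star_lo (hd : 1 ≤ d) {k M b : ℕ} (hM : M % 2 ^ k = 0) (hMb : M ≤ b)
    (hb : b < M + 2 ^ k) (hbL : b < 2 ^ (d * L)) :
    StarShapedWrt (interior (⋃ Q ∈ Set.Icc M b, mortonOmega d L Q)) (ctr d L M) := by
  apply star_interior
  · exact ctr_mem_interior M (Set.subset_biUnion_of_mem (Set.mem_Icc.mpr ⟨le_refl _, hMb⟩))
  · intro x hx y hy
    rw [Set.mem_iUnion₂] at hx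
    obtain ⟨Q, hQmem, hxQ⟩ := hx
    rw [Set.mem_Icc] at hQmem
    obtain ⟨Q', hQ'lt, hyΩ, hbet⟩ := seg_subset hd hxQ hy
    have hmcle : ∀ r : ℕ, mc d L r M ≤ mc d L r Q := by
      intro r
      have hQeq : Q = M + (Q - M) := by omega
      rw [hQeq]
      exact mc_align_le hM (by omega)
    have hQ'ge : M ≤ Q' := by
      apply mc_mono hd (lt_of_le_of_lt hMb hbL) hQ'lt
      intro r hr
      have := (hbet r hr).1
      rw [min_eq_left (hmcle r)] at this
      exact this
    have hQ'le : Q' ≤ Q := by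
      apply mc_mono hd hQ'lt (lt_of_le_of_lt hQmem.2 hbL)
      intro r hr
      have := (hbet r hr).2
      rw [max_eq_right (hmcle r)] at this
      exact this
    rw [Set.mem_iUnion₂]
    exact ⟨Q', Set.mem_Icc.mpr ⟨hQ'ge, le_trans hQ'le hQmem.2⟩, hyΩ⟩

lemma star_hi (hd : 1 ≤ d) {k M a : ℕ} (hM : M % 2 ^ k = 0) (hMk : 2 ^ k ≤ M)
    (ha : M - 2 ^ k ≤ a) (haM : a ≤ M - 1) (hL : M - 1 < 2 ^ (d * L)) :
    StarShapedWrt (interior (⋃ Q ∈ Set.Icc a (M - 1), mortonOmega d L Q))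
      (ctr d L (M - 1)) := by
  apply star_interior
  · exact ctr_mem_interior (M - 1) (Set.subset_biUnion_of_mem (Set.mem_Icc.mpr ⟨haM, le_refl _⟩))
  · intro x hx y hy
    rw [Set.mem_iUnion₂] at hx
    obtain ⟨Q, hQmem, hxQ⟩ := hx
    rw [Set.mem_Icc] at hQmem
    obtain ⟨Q', hQ'lt, hyΩ, hbet⟩ := seg_subset hd hxQ hy
    have h1 : 1 ≤ 2 ^ k := Nat.one_le_two_pow
    have hmcle : ∀ r : ℕ, mc d L r Q ≤ mc d L r (M - 1) :=
      fun r => mc_le_pred hM hMk (le_trans ha hQmem.1) (by omega)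
    have hQ'ge : Q ≤ Q' := by
      apply mc_mono hd (lt_of_le_of_lt hQmem.2 hL) hQ'lt
      intro r hr
      have := (hbet r hr).1
      rw [min_eq_right (hmcle r)] at this
      exact this
    have hQ'le : Q' ≤ M - 1 := by
      apply mc_mono hd hQ'lt hL
      intro r hr
      have := (hbet r hr).2
      rw [max_eq_left (hmcle r)] at this
      exact this
    rw [Set.mem_iUnion₂]
    exact ⟨Q', Set.mem_Icc.mpr ⟨le_trans hQmem.1 hQ'ge, hQ'le⟩, hyΩ⟩


end MortonAux

/-- The region `Y = ⋃_{Q=Qstart}^{Qend} Ω(Q)` either has star-shaped interior, or it is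
the union of two pieces `Y₁ = ⋃_{Q=Qstart}^{c} Ω(Q)` and `Y₂ = ⋃_{Q=c+1}^{Qend} Ω(Q)`
whose interiors are star-shaped. -/
theorem morton_union_two_starshaped (d L Qstart Qend : ℕ) (hd : 1 ≤ d)
    (hle : Qstart ≤ Qend) (hQend : Qend < 2 ^ (d * L)) :
    StarShaped (interior (⋃ Q ∈ Set.Icc Qstart Qend, mortonOmega d L Q)) ∨
    ∃ c, Qstart ≤ c ∧ c < Qend ∧
      (⋃ Q ∈ Set.Icc Qstart Qend, mortonOmega d L Q) =
        (⋃ Q ∈ Set.Icc Qstart c, mortonOmega d L Q) ∪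
        (⋃ Q ∈ Set.Icc (c + 1) Qend, mortonOmega d L Q) ∧
      StarShaped (interior (⋃ Q ∈ Set.Icc Qstart c, mortonOmega d L Q)) ∧
      StarShaped (interior (⋃ Q ∈ Set.Icc (c + 1) Qend, mortonOmega d L Q)) := by
  classical
  open MortonAux in
  rcases eq_or_lt_of_le hle with rfl | hab
  · left
    refine ⟨ctr d L Qstart, ?_⟩
    exact star_lo (k := 0) hd (Nat.mod_one _) (le_refl _) (by omega) hQend
  · right
    set P : ℕ → Prop := fun k => Qstart / 2 ^ k < Qend / 2 ^ k with hP
    have hP0 : P 0 := by simp [hP, Nat.div_one]; omega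
    set k₀ : ℕ := Nat.findGreatest P (d * L) with hk₀
    have hPk₀ : P k₀ := Nat.findGreatest_spec (Nat.zero_le _) hP0
    have hPdL : ¬ P (d * L) := by
      simp only [hP]
      rw [Nat.div_eq_of_lt hQend]
      exact Nat.not_lt_zero _
    have hk₀lt : k₀ < d * L := by
      have hle' : k₀ ≤ d * L := Nat.findGreatest_le _
      rcases eq_or_lt_of_le hle' with heq | h
      · exfalso; apply hPdL; rw [← heq]; exact hPk₀
      · exact h
    have hnot : ¬ P (k₀ + 1) :=
      Nat.findGreatest_is_greatest (Nat.lt_succ_self _) hk₀lt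
    set M : ℕ := (Qstart / 2 ^ k₀ + 1) * 2 ^ k₀ with hMdef
    have hpos : 0 < 2 ^ k₀ := Nat.pow_pos (n := _) (by norm_num : 0 < 2)
    have hMmod : M % 2 ^ k₀ = 0 := Nat.mul_mod_left _ _
    have hdm : 2 ^ k₀ * (Qstart / 2 ^ k₀) + Qstart % 2 ^ k₀ = Qstart := Nat.div_add_mod _ _
    have hmlt : Qstart % 2 ^ k₀ < 2 ^ k₀ := Nat.mod_lt _ hpos
    have hMe : M = 2 ^ k₀ * (Qstart / 2 ^ k₀) + 2 ^ k₀ := by rw [hMdef]; ring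
    have hMa : Qstart < M := by linarith
    have hMb : M ≤ Qend := by
      have h3 : Qstart / 2 ^ k₀ + 1 ≤ Qend / 2 ^ k₀ := hPk₀
      calc M ≤ Qend / 2 ^ k₀ * 2 ^ k₀ := Nat.mul_le_mul_right _ h3
        _ ≤ Qend := Nat.div_mul_le_self _ _
    have hb2 : Qend < M + 2 ^ k₀ := by
      by_contra hcon
      push_neg at hcon
      apply hnot
      have h4 : Qstart / 2 ^ k₀ + 2 ≤ Qend / 2 ^ k₀ := by
        rw [Nat.le_div_iff_mul_le hpos]
        calc (Qstart / 2 ^ k₀ + 2) * 2 ^ k₀ = M + 2 ^ k₀ := by rw [hMdef]; ring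
          _ ≤ Qend := hcon
      have h5 : ∀ n : ℕ, n / 2 ^ (k₀ + 1) = n / 2 ^ k₀ / 2 := by
        intro n
        rw [pow_succ, ← Nat.div_div_eq_div_mul]
      show Qstart / 2 ^ (k₀ + 1) < Qend / 2 ^ (k₀ + 1)
      rw [h5, h5]
      omega
    have ha2 : M - 2 ^ k₀ ≤ Qstart := by
      have h6 : M - 2 ^ k₀ = 2 ^ k₀ * (Qstart / 2 ^ k₀) := by omega
      rw [h6, Nat.mul_comm]
      exact Nat.div_mul_le_self _ _
    have hMk : 2 ^ k₀ ≤ M := by omega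
    refine ⟨M - 1, by omega, by omega, ?_, ?_, ?_⟩
    · have hIcc : Set.Icc Qstart Qend = Set.Icc Qstart (M - 1) ∪ Set.Icc (M - 1 + 1) Qend := by
        ext z
        simp only [Set.mem_Icc, Set.mem_union]
        omega
      rw [hIcc, Set.biUnion_union]
    · exact ⟨ctr d L (M - 1), star_hi hd hMmod hMk ha2 (by omega) (by omega)⟩
    · have hM1 : M - 1 + 1 = M := by omega
      rw [hM1]
      exact ⟨ctr d L M, star_lo hd hMmod hMb hb2 hQend⟩
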